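/- Let M ≥ 20 be an integer and let V = (ℤ/2ℤ)^{⌊M/4⌋}. Then there exist M vectors ξ₁,...,ξ_M ∈ V with the property that for every subset I ⊆ {1,...,M} with |I| ≥ 0.95·M, the vectors {ξᵢ : i ∈ I} span V. -/

import Mathlib

open Finset


lemma two_choose_le {M k : ℕ} (hM : 20 ≤ M) (hk : k = M / 20) :
    ∀ j < k, 2 * M.choose j ≤ M.choose (j + 1) := by
  intro j hj
  have h1 : M.choose (j+1) * (j+1) = M.choose j * (M - j) := Nat.choose_succ_right_eq M j
  have h2 : 2 * (j + 1) ≤ M - j := by omega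
  have h3 : 2 * M.choose j * (j + 1) ≤ M.choose (j+1) * (j + 1) := by
    calc 2 * M.choose j * (j + 1) = M.choose j * (2 * (j + 1)) := by ring
    _ ≤ M.choose j * (M - j) := Nat.mul_le_mul_left _ h2
    _ = M.choose (j+1) * (j+1) := h1.symm
  exact Nat.le_of_mul_le_mul_right h3 (by omega)

lemma sum_choose_le {M k : ℕ} (hM : 20 ≤ M) (hk : k = M / 20) :
    ∀ t ≤ k, ∑ j ∈ range (t + 1), M.choose j ≤ 2 * M.choose t := by
  intro t
  induction t with
  | zero => simp
  | succ t ih =>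
    intro ht
    rw [Finset.sum_range_succ]
    have h1 := ih (by omega)
    have h2 := two_choose_le hM hk t (by omega)
    omega

lemma choose_le_pow_main {M k : ℕ} (hM : 20 ≤ M) (hk : k = M / 20) :
    M.choose k ≤ 2 ^ (11 * k) := by
  have hkM : k ≤ M := by omega
  have hM40 : M ≤ 40 * k := by omega
  -- L3 : choose M k * 8^(M-k) ≤ 9^M
  have L3 : M.choose k * 8 ^ (M - k) ≤ 9 ^ M := by
    have hb : (9 : ℕ) ^ M = ∑ j ∈ range (M + 1), 1 ^ j * 8 ^ (M - j) * M.choose j := by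
      have := add_pow (1 : ℕ) 8 M
      norm_num at this ⊢
      rw [this]
    rw [hb]
    calc M.choose k * 8 ^ (M - k) = 1 ^ k * 8 ^ (M - k) * M.choose k := by ring
    _ ≤ _ := Finset.single_le_sum (f := fun j => 1 ^ j * 8 ^ (M - j) * M.choose j) (fun i _ => Nat.zero_le _) (Finset.mem_range.mpr (by omega))
  -- L4 : 9^M ≤ 2^(8k) * 8^M
  have L4 : (9:ℕ) ^ M ≤ 2 ^ (8 * k) * 8 ^ M := by
    have h1 : (9:ℕ) ^ M * 8 ^ (40 * k) ≤ 8 ^ M * 9 ^ (40 * k) := by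
      calc (9:ℕ) ^ M * 8 ^ (40 * k) = 9 ^ M * (8 ^ M * 8 ^ (40 * k - M)) := by
            rw [← pow_add]
            congr 2
            omega
      _ ≤ 9 ^ M * (8 ^ M * 9 ^ (40 * k - M)) := by
            gcongr <;> norm_num
      _ = 8 ^ M * (9 ^ M * 9 ^ (40 * k - M)) := by ring
      _ = 8 ^ M * 9 ^ (40 * k) := by
            rw [← pow_add]
            congr 2
            omega
    have h2 : (9:ℕ) ^ (40 * k) ≤ 2 ^ (8 * k) * 8 ^ (40 * k) := by
      calc (9:ℕ) ^ (40 * k) = (9 ^ 5) ^ (8 * k) := by rw [← pow_mul]; congr 1; ring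
      _ ≤ (2 * 8 ^ 5) ^ (8 * k) := Nat.pow_le_pow_left (by norm_num) _
      _ = 2 ^ (8 * k) * (8 ^ 5) ^ (8 * k) := by rw [mul_pow]
      _ = 2 ^ (8 * k) * 8 ^ (40 * k) := by rw [← pow_mul]; congr 2; ring
    have h3 : (9:ℕ) ^ M * 8 ^ (40 * k) ≤ (2 ^ (8 * k) * 8 ^ M) * 8 ^ (40 * k) := by
      calc (9:ℕ) ^ M * 8 ^ (40 * k) ≤ 8 ^ M * 9 ^ (40 * k) := h1
      _ ≤ 8 ^ M * (2 ^ (8 * k) * 8 ^ (40 * k)) := Nat.mul_le_mul_left _ h2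
      _ = (2 ^ (8 * k) * 8 ^ M) * 8 ^ (40 * k) := by ring
    exact Nat.le_of_mul_le_mul_right h3 (Nat.pow_pos (by norm_num))
  -- combine: choose M k * 8^(M-k) ≤ 2^(8k) * 8^(M-k) * 8^k
  have h5 : M.choose k * 8 ^ (M - k) ≤ (2 ^ (8 * k) * 8 ^ k) * 8 ^ (M - k) := by
    calc M.choose k * 8 ^ (M - k) ≤ 9 ^ M := L3
    _ ≤ 2 ^ (8 * k) * 8 ^ M := L4
    _ = (2 ^ (8 * k) * 8 ^ k) * 8 ^ (M - k) := by rw [mul_assoc, ← pow_add]; congr 2; omega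
  have h6 : M.choose k ≤ 2 ^ (8 * k) * 8 ^ k :=
    Nat.le_of_mul_le_mul_right h5 (Nat.pow_pos (by norm_num))
  calc M.choose k ≤ 2 ^ (8 * k) * 8 ^ k := h6
  _ = 2 ^ (11 * k) := by rw [show (8:ℕ) = 2^3 from rfl, ← pow_mul, ← pow_add]; congr 1; ring

lemma arith_main {M : ℕ} (hM : 20 ≤ M) :
    2 ^ (M / 4) * ∑ j ∈ range (M / 20 + 1), M.choose j ≤ 2 ^ M := by
  set k := M / 20 with hk
  have h1 : ∑ j ∈ range (k + 1), M.choose j ≤ 2 * M.choose k :=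
    sum_choose_le hM hk _ le_rfl
  have h2 := choose_le_pow_main hM hk
  have h3 : 2 ^ (M / 4) * ∑ j ∈ range (k + 1), M.choose j ≤ 2 ^ (M / 4) * (2 * 2 ^ (11 * k)) := by
    exact Nat.mul_le_mul_left _ (le_trans h1 (by omega))
  refine le_trans h3 ?_
  have : 2 ^ (M / 4) * (2 * 2 ^ (11 * k)) = 2 ^ (M / 4 + 1 + 11 * k) := by
    rw [pow_add, pow_add]; ring
  rw [this]
  exact Nat.pow_le_pow_right (by norm_num) (by omega)

/-- dot product -/
def dd {n : ℕ} (a x : Fin n → ZMod 2) : ZMod 2 := ∑ j, x j * a j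

lemma dd_add {n : ℕ} (a x y : Fin n → ZMod 2) : dd a (x + y) = dd a x + dd a y := by
  simp [dd, add_mul, Finset.sum_add_distrib]

lemma zmod2_ne_zero : ∀ z : ZMod 2, z ≠ 0 → z = 1 := by decide

/-- each fiber of a nonzero dot-functional has 2^(n-1) elements -/
lemma fiber_card {n : ℕ} (hn : 1 ≤ n) (a : Fin n → ZMod 2) (ha : a ≠ 0) (c : ZMod 2) :
    (univ.filter fun x : Fin n → ZMod 2 => dd a x = c).card = 2 ^ (n - 1) := by
  obtain ⟨j₀, hj₀⟩ : ∃ j₀, a j₀ ≠ 0 := Function.ne_iff.mp ha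
  set s : Fin n → ZMod 2 := Pi.single j₀ 1 with hs
  have hss : s + s = 0 := by
    funext t
    simp only [hs, Pi.add_apply, Pi.single_apply, Pi.zero_apply]
    split <;> decide
  have hds : dd a s = 1 := by
    have : dd a s = a j₀ := by
      simp [dd, hs, Pi.single_apply]
    rw [this, zmod2_ne_zero _ hj₀]
  have key : ∀ c' : ZMod 2,
      (univ.filter fun x : Fin n → ZMod 2 => dd a x = c').card
      = (univ.filter fun x : Fin n → ZMod 2 => dd a x = c' + 1).card := by
    intro c'
    apply Finset.card_bij' (fun x _ => x + s) (fun x _ => x + s)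
    · intro x hx
      simp only [Finset.mem_filter, Finset.mem_univ, true_and] at hx ⊢
      rw [dd_add, hx, hds]
    · intro x hx
      simp only [Finset.mem_filter, Finset.mem_univ, true_and] at hx ⊢
      rw [dd_add, hx, hds]
      have : (1 : ZMod 2) + 1 = 0 := by decide
      rw [add_assoc, this, add_zero]
    · intro x _; rw [add_assoc, hss, add_zero]
    · intro x _; rw [add_assoc, hss, add_zero]
  have h01 : (univ.filter fun x : Fin n → ZMod 2 => dd a x = 0).card
      = (univ.filter fun x : Fin n → ZMod 2 => dd a x = 1).card := by
    have := key 0; simpa using this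
  have hsplit : (univ.filter fun x : Fin n → ZMod 2 => dd a x = 0).card
      + (univ.filter fun x : Fin n → ZMod 2 => dd a x = 1).card
      = 2 ^ n := by
    have h1 : (univ.filter fun x : Fin n → ZMod 2 => ¬ (dd a x = 0))
        = (univ.filter fun x : Fin n → ZMod 2 => dd a x = 1) := by
      apply Finset.filter_congr
      intro x _
      constructor
      · exact fun h => zmod2_ne_zero _ h
      · intro h; rw [h]; decide
    rw [← h1]
    rw [Finset.card_filter_add_card_filter_not]
    · simp [Fintype.card_fun]
  have hcard2 : ∀ c' : ZMod 2,
      2 * (univ.filter fun x : Fin n → ZMod 2 => dd a x = c').card = 2 ^ n := by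
    intro c'
    have : c' = 0 ∨ c' = 1 := by revert c'; decide
    rcases this with h | h <;> subst h <;> omega
  have := hcard2 c
  have hpow : 2 ^ n = 2 * 2 ^ (n - 1) := by
    rw [← pow_succ']
    congr 1
    omega
  omega

/-- counting words of weight ≤ k -/
lemma weight_card {M k : ℕ} :
    (univ.filter fun w : Fin M → ZMod 2 =>
      (univ.filter fun i => w i ≠ 0).card ≤ k).card
    ≤ ∑ j ∈ range (k + 1), M.choose j := by
  set T : Finset (Finset (Fin M)) :=
    (range (k + 1)).biUnion (fun j => Finset.powersetCard j (univ : Finset (Fin M))) with hT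
  have hinj : ∀ w ∈ (univ.filter fun w : Fin M → ZMod 2 =>
      (univ.filter fun i => w i ≠ 0).card ≤ k),
      (univ.filter fun i => w i ≠ 0) ∈ T := by
    intro w hw
    simp only [Finset.mem_filter, Finset.mem_univ, true_and] at hw
    simp only [hT, Finset.mem_biUnion, Finset.mem_range, Finset.mem_powersetCard]
    exact ⟨_, by omega, Finset.subset_univ _, rfl⟩
  have hcard := Finset.card_le_card_of_injOn
    (f := fun w : Fin M → ZMod 2 => univ.filter fun i => w i ≠ 0)
    hinj ?_
  · refine hcard.trans ?_
    refine (Finset.card_biUnion_le).trans ?_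
    apply Finset.sum_le_sum
    intro j _
    rw [Finset.card_powersetCard, Finset.card_univ, Fintype.card_fin]
  · intro w hw w' hw' h
    funext i
    have : (w i ≠ 0) ↔ (w' i ≠ 0) := by
      constructor <;> intro hz <;>
        [have := (Finset.ext_iff.mp h i).mp; have := (Finset.ext_iff.mp h i).mpr] <;>
        simp only [Finset.mem_filter, Finset.mem_univ, true_and] at this <;>
        exact this hz
    revert this
    generalize w i = z; generalize w' i = z'
    revert z z'; decide

/-- main existence lemma -/
lemma exists_good (n M k : ℕ) (hn : 1 ≤ n)
    (hcount : 2 ^ n * ∑ j ∈ range (k + 1), M.choose j ≤ 2 ^ M) :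
    ∃ ξ : Fin M → (Fin n → ZMod 2), ∀ a : Fin n → ZMod 2, a ≠ 0 →
      k < (univ.filter fun i => dd a (ξ i) ≠ 0).card := by
  by_contra hcon
  push_neg at hcon
  set V := Fin n → ZMod 2
  set S := ∑ j ∈ range (k + 1), M.choose j with hS
  set A : Finset V := univ.filter (· ≠ (0 : V)) with hA
  set Bad : V → Finset (Fin M → V) :=
    fun a => univ.filter fun ξ => (univ.filter fun i => dd a (ξ i) ≠ 0).card ≤ k with hBad
  -- every ξ is in some Bad a
  have hcover : (univ : Finset (Fin M → V)) ⊆ A.biUnion Bad := by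
    intro ξ _
    obtain ⟨a, ha, hwa⟩ := hcon ξ
    exact Finset.mem_biUnion.mpr ⟨a, by simp [hA, ha], by simp [hBad, hwa]⟩
  -- card of each Bad a
  have hbadcard : ∀ a ∈ A, (Bad a).card ≤ S * 2 ^ ((n - 1) * M) := by
    intro a haA
    have ha : a ≠ 0 := by simpa [hA] using haA
    set Wk : Finset (Fin M → ZMod 2) := univ.filter fun w =>
      (univ.filter fun i => w i ≠ 0).card ≤ k with hWk
    have hsub : Bad a ⊆ Wk.biUnion fun w =>
        univ.filter fun ξ : Fin M → V => (fun i => dd a (ξ i)) = w := by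
      intro ξ hξ
      simp only [hBad, Finset.mem_filter, Finset.mem_univ, true_and] at hξ
      refine Finset.mem_biUnion.mpr ⟨fun i => dd a (ξ i), ?_, by simp⟩
      simp only [hWk, Finset.mem_filter, Finset.mem_univ, true_and]
      exact hξ
    have hfib : ∀ w : Fin M → ZMod 2,
        (univ.filter fun ξ : Fin M → V => (fun i => dd a (ξ i)) = w).card
        = 2 ^ ((n - 1) * M) := by
      intro w
      have : (univ.filter fun ξ : Fin M → V => (fun i => dd a (ξ i)) = w)
          = Fintype.piFinset fun i => univ.filter fun x : V => dd a x = w i := by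
        ext ξ
        simp only [Finset.mem_filter, Finset.mem_univ, true_and,
          Fintype.mem_piFinset, funext_iff]
      rw [this, Fintype.card_piFinset]
      rw [show (∏ i, (univ.filter fun x : V => dd a x = w i).card) = ∏ _i : Fin M, 2 ^ (n - 1) from
        Finset.prod_congr rfl fun i _ => fiber_card hn a ha (w i)]
      rw [Finset.prod_const, Finset.card_univ, Fintype.card_fin, ← pow_mul]
    calc (Bad a).card ≤ _ := Finset.card_le_card hsub
    _ ≤ ∑ w ∈ Wk, (univ.filter fun ξ : Fin M → V => (fun i => dd a (ξ i)) = w).card :=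
        Finset.card_biUnion_le
    _ = Wk.card * 2 ^ ((n - 1) * M) := by
        rw [Finset.sum_congr rfl fun w _ => hfib w, Finset.sum_const, smul_eq_mul]
    _ ≤ S * 2 ^ ((n - 1) * M) := by
        exact Nat.mul_le_mul_right _ weight_card
  -- total count
  have hAcard : A.card = 2 ^ n - 1 := by
    rw [hA, Finset.filter_ne', Finset.card_erase_of_mem (Finset.mem_univ _), Finset.card_univ]
    congr 1
    simp only [V, Fintype.card_fun, ZMod.card, Fintype.card_fin]
  have htot : (2 ^ n) ^ M ≤ (2 ^ n - 1) * (S * 2 ^ ((n - 1) * M)) := by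
    calc (2 ^ n) ^ M = Fintype.card (Fin M → V) := by
          simp only [V, Fintype.card_fun, ZMod.card, Fintype.card_fin, ← pow_mul]
    _ = (univ : Finset (Fin M → V)).card := (Finset.card_univ).symm
    _ ≤ (A.biUnion Bad).card := Finset.card_le_card hcover
    _ ≤ ∑ a ∈ A, (Bad a).card := Finset.card_biUnion_le
    _ ≤ ∑ _a ∈ A, S * 2 ^ ((n - 1) * M) := Finset.sum_le_sum hbadcard
    _ = A.card * (S * 2 ^ ((n - 1) * M)) := by rw [Finset.sum_const, smul_eq_mul]
    _ = (2 ^ n - 1) * (S * 2 ^ ((n - 1) * M)) := by rw [hAcard]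
  -- contradiction with hcount
  have hS1 : 1 ≤ S := by
    have : M.choose 0 = 1 := Nat.choose_zero_right M
    have h0 : 0 ∈ range (k + 1) := Finset.mem_range.mpr (by omega)
    calc 1 = M.choose 0 := this.symm
    _ ≤ S := Finset.single_le_sum (f := fun j => M.choose j) (fun i _ => Nat.zero_le _) h0
  have hpowsplit : (2 ^ n) ^ M = 2 ^ M * 2 ^ ((n - 1) * M) := by
    rw [← pow_mul, ← pow_add]
    congr 1
    have : 1 ≤ n := hn
    nlinarith [Nat.sub_add_cancel hn]
  have hlt : (2 ^ n - 1) * (S * 2 ^ ((n - 1) * M)) < (2 ^ n) ^ M := by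
    rw [hpowsplit]
    have h1 : (2 ^ n - 1) * S < 2 ^ M := by
      have h2 : 2 ^ n * S ≤ 2 ^ M := hcount
      have h3 : (2 ^ n - 1) * S + S = 2 ^ n * S := by
        have : 1 ≤ 2 ^ n := Nat.one_le_two_pow
        nlinarith [Nat.sub_add_cancel this]
      omega
    calc (2 ^ n - 1) * (S * 2 ^ ((n - 1) * M)) = ((2 ^ n - 1) * S) * 2 ^ ((n - 1) * M) := by ring
    _ < 2 ^ M * 2 ^ ((n - 1) * M) := by
        exact mul_lt_mul_of_pos_right h1 (by positivity)
  omega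

/-- Lemma 9.1, case `M ≥ 20`. Let `M ≥ 20` and
`V = (ℤ/2ℤ)^{⌊M/4⌋}`. Then there exist `M` vectors `ξ₁, …, ξ_M ∈ V` such that any
95 percent of them span `V`: for every `I ⊆ {1, …, M}` with `|I| ≥ 0.95·M`, the
vectors `{ξᵢ : i ∈ I}` span `V` over `ℤ/2ℤ`. -/
theorem robust_spanning_family (M : ℕ) (hM : 20 ≤ M) :
    ∃ ξ : Fin M → (Fin (M / 4) → ZMod 2),
      ∀ I : Finset (Fin M), (0.95 : ℝ) * M ≤ I.card →
        Submodule.span (ZMod 2) (ξ '' ↑I) = ⊤ := by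
  set n := M / 4 with hn4
  have hn : 1 ≤ n := by omega
  set k := M / 20 with hk
  obtain ⟨ξ, hξ⟩ := exists_good n M k hn (arith_main hM)
  refine ⟨ξ, ?_⟩
  intro I hI
  by_contra hne
  have hlt : Submodule.span (ZMod 2) (ξ '' ↑I) < ⊤ := lt_top_iff_ne_top.mpr hne
  obtain ⟨f, hf0, hfmap⟩ := Submodule.exists_dual_map_eq_bot_of_lt_top hlt inferInstance
  set a : Fin n → ZMod 2 := fun i => f (fun j => if i = j then 1 else 0) with ha
  have hfx : ∀ x, f x = dd a x := by
    intro x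
    rw [LinearMap.pi_apply_eq_sum_univ f x]
    simp [dd, ha, smul_eq_mul]
  have ha0 : a ≠ 0 := by
    intro h
    apply hf0
    apply LinearMap.ext
    intro x
    rw [hfx x, h]
    simp [dd]
  have hvanish : ∀ i ∈ I, dd a (ξ i) = 0 := by
    intro i hi
    rw [← hfx]
    have hmem : ξ i ∈ Submodule.span (ZMod 2) (ξ '' ↑I) :=
      Submodule.subset_span ⟨i, hi, rfl⟩
    have hmm : f (ξ i) ∈ Submodule.map f (Submodule.span (ZMod 2) (ξ '' ↑I)) :=
      Submodule.mem_map_of_mem hmem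
    rw [hfmap] at hmm
    simpa using hmm
  have hsub : (univ.filter fun i => dd a (ξ i) ≠ 0) ⊆ univ \ I := by
    intro i hi
    simp only [Finset.mem_filter, Finset.mem_univ, true_and] at hi
    simp only [Finset.mem_sdiff, Finset.mem_univ, true_and]
    intro hiI; exact hi (hvanish i hiI)
  have hcard : (univ.filter fun i => dd a (ξ i) ≠ 0).card ≤ M - I.card := by
    refine (Finset.card_le_card hsub).trans ?_
    rw [Finset.card_sdiff_of_subset (Finset.subset_univ I), Finset.card_univ, Fintype.card_fin]
  have hIle : I.card ≤ M := by
    simpa using Finset.card_le_card (Finset.subset_univ I)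
  have hreal : (19 : ℕ) * M ≤ 20 * I.card := by
    have h1 : (19 : ℝ) * M ≤ 20 * I.card := by nlinarith [hI]
    exact_mod_cast h1
  have hw := hξ a ha0
  omega
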